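/- Let r be a natural number and f a polynomial in r variables with rational coefficients such that f takes integer values at every point of ℤ^r. Then there exists a natural number k such that for all x, y ∈ ℤ^r, the difference f(x + 2^k·y) − f(x) is an even integer. -/

import Mathlib

open MvPolynomial

/-- If `f` is a rational polynomial in `r` variables taking integer values on `ℤ^r`,
then there is a `k` such that `f(x + 2^k·y) − f(x)` is an even integer for all
`x, y ∈ ℤ^r`. -/
theorem integer_valued_polynomial_two_power_periodicity
    (r : ℕ) (f : MvPolynomial (Fin r) ℚ)
    (hf : ∀ x : Fin r → ℤ, ∃ z : ℤ,
      MvPolynomial.eval (fun i => (x i : ℚ)) f = (z : ℚ)) :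
    ∃ k : ℕ, ∀ x y : Fin r → ℤ, ∃ z : ℤ,
      MvPolynomial.eval (fun i => ((x i + 2 ^ k * y i : ℤ) : ℚ)) f -
        MvPolynomial.eval (fun i => (x i : ℚ)) f = 2 * (z : ℚ) := by
  classical
  set D : ℕ := ∏ m ∈ f.support, (f.coeff m).den with hD
  have hD0 : D ≠ 0 := Finset.prod_ne_zero_iff.2 fun m _ => (f.coeff m).den_nz
  set a : ℕ := D.factorization 2 with ha
  set c : ℕ := D / 2 ^ a with hc
  have hDac : 2 ^ a * c = D := Nat.ordProj_mul_ordCompl_eq_self D 2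
  have hcodd : ¬ (2 ∣ c) := Nat.not_dvd_ordCompl Nat.prime_two hD0
  set g : MvPolynomial (Fin r) ℤ :=
    ∑ m ∈ f.support, monomial m ((f.coeff m).num * ((D / (f.coeff m).den : ℕ) : ℤ)) with hg
  have hmap : MvPolynomial.map (Int.castRingHom ℚ) g = MvPolynomial.C (D : ℚ) * f := by
    conv_rhs => rw [f.as_sum, Finset.mul_sum]
    rw [hg, map_sum]
    refine Finset.sum_congr rfl fun m hm => ?_
    rw [map_monomial, C_mul_monomial]
    congr 1
    have hdvd : (f.coeff m).den ∣ D := Finset.dvd_prod_of_mem _ hm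
    have h1 : ((D / (f.coeff m).den : ℕ) : ℚ) * ((f.coeff m).den : ℚ) = (D : ℚ) := by
      rw [← Nat.cast_mul, Nat.div_mul_cancel hdvd]
    have h2 : ((f.coeff m).num : ℚ) = f.coeff m * ((f.coeff m).den : ℚ) := by
      have hden : ((f.coeff m).den : ℚ) ≠ 0 := Nat.cast_ne_zero.2 (f.coeff m).den_nz
      rw [Rat.mul_den_eq_num]
    simp only [eq_intCast, Int.cast_mul, Int.cast_natCast]
    rw [h2, ← h1]
    ring
  -- evaluation of g at integer points matches D * eval of f
  have hevalg : ∀ v : Fin r → ℤ,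
      ((MvPolynomial.eval v g : ℤ) : ℚ) = (D : ℚ) * MvPolynomial.eval (fun i => (v i : ℚ)) f := by
    intro v
    have key := eval₂_comp_left (Int.castRingHom ℚ) (RingHom.id ℤ) v g
    simp only [RingHomCompTriple.comp_eq, eval₂_id, eq_intCast] at key
    have key2 : ((MvPolynomial.eval v g : ℤ) : ℚ)
        = MvPolynomial.eval (fun i => (v i : ℚ)) (MvPolynomial.map (Int.castRingHom ℚ) g) := by
      rw [eval_map]
      exact key
    rw [key2, hmap, map_mul, eval_C]
  refine ⟨a + 1, fun x y => ?_⟩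
  set u : Fin r → ℤ := fun i => x i + 2 ^ (a + 1) * y i with hu
  -- divisibility of the integer difference
  have hdvd : (2 ^ (a + 1) : ℤ) ∣ MvPolynomial.eval u g - MvPolynomial.eval x g := by
    have h2 : ((2 ^ (a + 1) : ℕ) : ℤ) ∣ MvPolynomial.eval u g - MvPolynomial.eval x g := by
      rw [← ZMod.intCast_zmod_eq_zero_iff_dvd]
      push_cast
      rw [sub_eq_zero]
      have key : ∀ v : Fin r → ℤ, ((MvPolynomial.eval v g : ℤ) : ZMod (2 ^ (a + 1)))
          = MvPolynomial.eval₂ (Int.castRingHom (ZMod (2 ^ (a + 1))))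
              (fun i => ((v i : ℤ) : ZMod (2 ^ (a + 1)))) g := by
        intro v
        have key := eval₂_comp_left (Int.castRingHom (ZMod (2 ^ (a + 1)))) (RingHom.id ℤ) v g
        simp only [RingHomCompTriple.comp_eq, eval₂_id, eq_intCast] at key
        exact key
      rw [key u, key x]
      congr 1
      funext i
      rw [hu]
      push_cast
      have : ((2 ^ (a + 1) : ℕ) : ZMod (2 ^ (a + 1))) = 0 := ZMod.natCast_self _
      push_cast at this
      rw [this]
      ring
    exact_mod_cast h2
  obtain ⟨z1, hz1⟩ := hf u
  obtain ⟨z2, hz2⟩ := hf x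
  have hDt : (D : ℤ) * (z1 - z2) = MvPolynomial.eval u g - MvPolynomial.eval x g := by
    have e1 := hevalg u
    have e2 := hevalg x
    rw [hz1] at e1
    rw [hz2] at e2
    have : ((D : ℤ) * (z1 - z2) : ℚ) =
        ((MvPolynomial.eval u g - MvPolynomial.eval x g : ℤ) : ℚ) := by
      push_cast
      rw [mul_sub, ← e1, ← e2]
    exact_mod_cast this
  -- extract evenness
  obtain ⟨w, hw⟩ := hdvd
  have hct : (c : ℤ) * (z1 - z2) = 2 * w := by
    have h2a : (2 ^ a : ℤ) ≠ 0 := by positivity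
    apply mul_left_cancel₀ h2a
    have : ((2 ^ a * c : ℕ) : ℤ) * (z1 - z2) = 2 ^ (a + 1) * w := by
      rw [hDac]; rw [hDt, hw]
    push_cast at this
    rw [← mul_assoc, this]
    ring
  have h2t : (2 : ℤ) ∣ (z1 - z2) := by
    have : (2 : ℤ) ∣ (c : ℤ) * (z1 - z2) := ⟨w, hct⟩
    rcases Int.Prime.dvd_mul' Nat.prime_two this with h | h
    · exfalso; exact hcodd (by exact_mod_cast h)
    · exact h
  obtain ⟨z, hz⟩ := h2t
  refine ⟨z, ?_⟩
  rw [hz1, hz2]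
  have hcast : (z1 : ℚ) - z2 = ((z1 - z2 : ℤ) : ℚ) := by push_cast; ring
  rw [hcast, hz]
  push_cast
  ring
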